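/- Let (k_n) be an increasing sequence of positive integers with k_n/(k_n+1) ∉ {x_1,...,x_n} for each n, where {x_i} is an enumeration of ℚ. Then on S = ℚ, the Dirac measures μ_n = δ_{k_n/(k_n+1)} converge weakly to μ = δ_1, and with f_n = g_n = −n·1{s ∈ {x_1,...,x_n}}, the condition −∞ < ∫_S limsup_{n→∞, s'→s} g_n(s') dμ ≤ liminf_n ∫_S g_n dμ_n holds (both sides equal 0), even though no real-valued function g with g ≤ f_n for all n exists (any such g ≡ −∞). -/

import Mathlib

open MeasureTheory Filter Topology ENNReal
open scoped Classical

/-- The positive part of an extended real number, as an element of `ℝ≥0∞`. -/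
noncomputable def eposPart (x : EReal) : ℝ≥0∞ :=
  if x = ⊤ then ⊤ else ENNReal.ofReal x.toReal

/-- The integral of an extended-real-valued function: `∫ f⁺ dμ − ∫ f⁻ dμ`. -/
noncomputable def eintegral {S : Type*} [MeasurableSpace S]
    (μ : MeasureTheory.Measure S) (f : S → EReal) : EReal :=
  ((∫⁻ s, eposPart (f s) ∂μ : ℝ≥0∞) : EReal) -
    ((∫⁻ s, eposPart (-f s) ∂μ : ℝ≥0∞) : EReal)

/-- The integral of an extended-real-valued function `f` is defined when
`min(∫ f⁺ dμ, ∫ f⁻ dμ) < ∞`. -/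
def EIntegralDefined {S : Type*} [MeasurableSpace S]
    (μ : MeasureTheory.Measure S) (f : S → EReal) : Prop :=
  (∫⁻ s, eposPart (f s) ∂μ) ≠ ⊤ ∨ (∫⁻ s, eposPart (-f s) ∂μ) ≠ ⊤

/-- On `S = ℚ`, with `μ_n = δ_{k_n/(k_n+1)}` where `k_n/(k_n+1) ∉ {x_1,…,x_n}`
and `f_n = g_n = −n·1{s ∈ {x_1,…,x_n}}`: the `μ_n` converge weakly to
`μ = δ_1`, the condition `−∞ < ∫ limsup_{n,s'→s} g_n dμ ≤ liminf_n ∫ g_n dμ_n`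
holds (both sides equal `0`), yet no real-valued function `g` with
`g ≤ f_n` for all `n` exists. -/
theorem rational_example_theorem3_applies
    (x : ℕ → ℚ) (hx : Function.Bijective x)
    (k : ℕ → ℕ) (hk : StrictMono k) (hkpos : ∀ n, 0 < k n)
    (hknotin : ∀ n, ∀ i, 1 ≤ i → i ≤ n →
      x i ≠ ((k n : ℚ) / ((k n : ℚ) + 1)))
    (f : ℕ → ℚ → EReal)
    (hf : ∀ n s, f n s =
      if ∃ i, 1 ≤ i ∧ i ≤ n ∧ x i = s then (-(n : ℝ) : EReal) else 0) :
    (∀ h : ℚ → ℝ, Continuous h → (∃ C : ℝ, ∀ s, |h s| ≤ C) →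
      Tendsto (fun n => ∫ s, h s ∂(Measure.dirac ((k n : ℚ) / ((k n : ℚ) + 1))))
        atTop (𝓝 (∫ s, h s ∂(Measure.dirac (1 : ℚ))))) ∧
    eintegral (Measure.dirac (1 : ℚ))
      (fun s => limsup (fun p : ℕ × ℚ => f p.1 p.2) (atTop ×ˢ 𝓝 s)) = 0 ∧
    liminf (fun n =>
      eintegral (Measure.dirac ((k n : ℚ) / ((k n : ℚ) + 1))) (f n)) atTop = 0 ∧
    ¬∃ g : ℚ → ℝ, ∀ n s, (g s : EReal) ≤ f n s := by

  set q : ℕ → ℚ := fun n => (k n : ℚ) / ((k n : ℚ) + 1) with hqdef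
  -- q n → 1
  have hq : Tendsto q atTop (𝓝 (1 : ℚ)) := by
    rw [Metric.tendsto_atTop]
    intro ε hε
    obtain ⟨N, hN⟩ := exists_nat_gt (1 / ε)
    refine ⟨N, fun n hn => ?_⟩
    have hkn : (n : ℝ) ≤ (k n : ℝ) := by exact_mod_cast hk.le_apply
    have hpos : (0 : ℝ) < (k n : ℝ) + 1 := by positivity
    rw [Rat.dist_eq]
    have heq : ((q n : ℚ) : ℝ) - 1 = -(1 / ((k n : ℝ) + 1)) := by
      rw [hqdef]; push_cast; field_simp; ring
    rw [Rat.cast_one, heq, abs_neg, abs_of_pos (by positivity), div_lt_iff₀ hpos]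
    have h1 : 1 < (N : ℝ) * ε := (div_lt_iff₀ hε).mp hN
    have h2 : (N : ℝ) ≤ (k n : ℝ) + 1 := by
      have : (N : ℝ) ≤ (n : ℝ) := by exact_mod_cast hn
      linarith
    calc (1:ℝ) < (N:ℝ) * ε := h1
      _ ≤ ((k n : ℝ) + 1) * ε := by
          exact mul_le_mul_of_nonneg_right h2 hε.le
      _ = ε * ((k n : ℝ) + 1) := by ring
  -- f n (q n) = 0
  have hfq : ∀ n, f n (q n) = 0 := by
    intro n
    rw [hf, if_neg]
    rintro ⟨i, h1, h2, h3⟩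
    exact hknotin n i h1 h2 h3
  -- f is nonpositive
  have hfle : ∀ n s, f n s ≤ 0 := by
    intro n s
    rw [hf]
    split
    · exact_mod_cast neg_nonpos.mpr (Nat.cast_nonneg n)
    · exact le_refl _
  refine ⟨?_, ?_, ?_, ?_⟩
  · -- weak convergence
    intro h hcont _
    rw [integral_dirac]
    simp only [integral_dirac]
    exact (hcont.tendsto 1).comp hq
  · -- ∫ limsup dμ = 0
    have F1 : limsup (fun p : ℕ × ℚ => f p.1 p.2) (atTop ×ˢ 𝓝 (1 : ℚ)) = 0 := by
      apply le_antisymm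
      · calc limsup (fun p : ℕ × ℚ => f p.1 p.2) (atTop ×ˢ 𝓝 (1 : ℚ))
            ≤ limsup (fun _ : ℕ × ℚ => (0 : EReal)) (atTop ×ˢ 𝓝 (1 : ℚ)) :=
              limsup_le_limsup (Eventually.of_forall fun p => hfle p.1 p.2)
          _ = 0 := limsup_const 0
      · refine le_limsup_of_frequently_le ?_ (isBoundedUnder_of ⟨⊤, fun _ => le_top⟩)
        rw [Filter.frequently_iff]
        intro U hU
        rw [Filter.mem_prod_iff] at hU
        obtain ⟨A, hA, B, hB, hAB⟩ := hU
        obtain ⟨N, hN⟩ := mem_atTop_sets.mp hA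
        obtain ⟨M, hM⟩ := eventually_atTop.mp (hq.eventually_mem hB)
        refine ⟨(max N M, q (max N M)),
          hAB ⟨hN _ (le_max_left _ _), hM _ (le_max_right _ _)⟩, ?_⟩
        rw [hfq]
    unfold eintegral
    rw [lintegral_dirac, lintegral_dirac]
    simp only [F1]
    simp [eposPart]
  · -- liminf ∫ f_n dμ_n = 0
    have hint : ∀ n, eintegral (Measure.dirac (q n)) (f n) = 0 := by
      intro n
      unfold eintegral
      rw [lintegral_dirac, lintegral_dirac, hfq]
      simp [eposPart]
    simp only [hqdef] at hint
    simp only [hint]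
    exact liminf_const 0
  · -- no real g below all f n
    rintro ⟨g, hg⟩
    obtain ⟨n, hn⟩ := exists_nat_gt (-(g (x 1)))
    have h := hg (n + 1) (x 1)
    rw [hf, if_pos ⟨1, le_refl 1, by omega, rfl⟩] at h
    rw [← EReal.coe_neg, EReal.coe_le_coe_iff] at h
    push_cast at h
    linarith
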